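/- The subspace W with the restricted structures is a Frobenius algebra: W is closed under ∘, the restricted multiplication on W is commutative and associative with unity e^⊤, the restriction of B to W is a symmetric nondegenerate bilinear form, and B(x ∘ y, z) = B(x, y ∘ z) holds for all x, y, z ∈ W (Corollary 2.9 of the paper, in algebraic form). -/

import Mathlib

/-- Corollary 2.9, algebraic form.  Suppose `V` is a finite-dimensional complex
vector space with nondegenerate symmetric bilinear form `B` and a commutative, associative,
`B`-invariant bilinear multiplication `∘` with unity `e`.  If `W` is a subspace with `W ∘ W ⊆ W`
on which the restriction of `B` is nondegenerate, and `e = e^⊤ + e^⊥` with `e^⊤ ∈ W`,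
`e^⊥ ∈ W^⊥`, then `W` with the restricted structures is a Frobenius algebra: `W` is closed
under `∘`, the restricted multiplication is commutative and associative with unity `e^⊤ ∈ W`,
the restriction of `B` to `W` is symmetric and nondegenerate, and the invariance
`B (x ∘ y) z = B x (y ∘ z)` holds on `W`. -/
theorem subspace_is_Frobenius_algebra
    {V : Type*} [AddCommGroup V] [Module ℂ V] [FiniteDimensional ℂ V]
    (B : LinearMap.BilinForm ℂ V)
    (hBsymm : ∀ x y : V, B x y = B y x)
    (hBnd : B.Nondegenerate)
    (mul : V →ₗ[ℂ] V →ₗ[ℂ] V)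
    (hcomm : ∀ x y : V, mul x y = mul y x)
    (hassoc : ∀ x y z : V, mul (mul x y) z = mul x (mul y z))
    (hinv : ∀ x y z : V, B (mul x y) z = B x (mul y z))
    (W : Submodule ℂ V)
    (hres : (B.restrict W).Nondegenerate)
    (hcompl : IsCompl W (B.orthogonal W))
    (hclosed : ∀ x y : V, x ∈ W → y ∈ W → mul x y ∈ W)
    (e eT eP : V)
    (hunity : ∀ x : V, mul e x = x)
    (heT : eT ∈ W) (heP : eP ∈ B.orthogonal W) (hdecomp : e = eT + eP) :
    (∀ x y : V, x ∈ W → y ∈ W → mul x y ∈ W) ∧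
    (∀ x y : V, x ∈ W → y ∈ W → mul x y = mul y x) ∧
    (∀ x y z : V, x ∈ W → y ∈ W → z ∈ W → mul (mul x y) z = mul x (mul y z)) ∧
    (eT ∈ W ∧ ∀ x : V, x ∈ W → mul eT x = x ∧ mul x eT = x) ∧
    (∀ x y : V, x ∈ W → y ∈ W → B x y = B y x) ∧
    (B.restrict W).Nondegenerate ∧
    (∀ x y z : V, x ∈ W → y ∈ W → z ∈ W → B (mul x y) z = B x (mul y z)) := by
  have hunit : ∀ x : V, x ∈ W → mul eT x = x := by
    intro x hx
    -- mul eP x ∈ W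
    have hsum : mul eT x + mul eP x = x := by
      have := hunity x
      rw [hdecomp] at this
      simpa [map_add, LinearMap.add_apply] using this
    have hWmem : mul eP x ∈ W := by
      have : mul eP x = x - mul eT x := by rw [eq_sub_iff_add_eq, add_comm]; exact hsum
      rw [this]
      exact Submodule.sub_mem W hx (hclosed eT x heT hx)
    have hOrth : mul eP x ∈ B.orthogonal W := by
      rw [LinearMap.BilinForm.mem_orthogonal_iff]
      intro w hw
      have : B w (mul eP x) = B (mul w x) eP := by
        rw [hinv w x eP, hcomm x eP]
      rw [this]
      have h2 := LinearMap.BilinForm.mem_orthogonal_iff.mp heP (mul w x) (hclosed w x hw hx)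
      exact h2
    have h0 : mul eP x = 0 := by
      have := hcompl.disjoint
      exact (Submodule.disjoint_def.mp this) _ hWmem hOrth
    rw [h0, add_zero] at hsum; exact hsum
  refine ⟨hclosed, fun x y _ _ => hcomm x y, fun x y z _ _ _ => hassoc x y z,
    ⟨heT, fun x hx => ⟨hunit x hx, by rw [hcomm]; exact hunit x hx⟩⟩,
    fun x y _ _ => hBsymm x y, hres, fun x y z _ _ _ => hinv x y z⟩
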